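/- For any n distinct points ζ_1, ..., ζ_n in the open unit disk, the n×n Gram matrix G with entries G_{kj} = 1/(1 - ζ_j·conj(ζ_k)) is positive definite. -/

import Mathlib

open scoped ComplexOrder

theorem stmt_2 (n : ℕ) (ζ : Fin n → ℂ) (hζ : ∀ k, ‖ζ k‖ < 1)
    (hinj : Function.Injective ζ) :
    (Matrix.of fun k j : Fin n => 1 / (1 - ζ j * (starRingEnd ℂ) (ζ k))).PosDef := by
  have hw : ∀ k j : Fin n, ‖ζ j * (starRingEnd ℂ) (ζ k)‖ < 1 := by
    intro k j
    rw [norm_mul, RingHomIsometric.norm_map]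
    calc ‖ζ j‖ * ‖ζ k‖ ≤ 1 * ‖ζ k‖ := by
          exact mul_le_mul_of_nonneg_right (le_of_lt (hζ j)) (norm_nonneg _)
      _ = ‖ζ k‖ := one_mul _
      _ < 1 := hζ k
  rw [Matrix.posDef_iff_dotProduct_mulVec]
  constructor
  · -- Hermitian
    ext k j
    simp only [Matrix.conjTranspose_apply, Matrix.of_apply, star_div₀, star_one, star_sub,
      star_mul', RingHom.id_apply]
    congr 1
    simp [mul_comm]
  · intro x hx
    set f : ℕ → ℂ := fun m => ∑ j, x j * ζ j ^ m with hf
    -- summability of each geometric piece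
    have hsummand : ∀ k j : Fin n,
        Summable (fun m : ℕ => (starRingEnd ℂ) (x k) * x j * (ζ j * (starRingEnd ℂ) (ζ k)) ^ m) :=
      fun k j => (summable_geometric_of_norm_lt_one (hw k j)).mul_left _
    have hsumin : ∀ k : Fin n, Summable (fun m : ℕ =>
        ∑ j, (starRingEnd ℂ) (x k) * x j * (ζ j * (starRingEnd ℂ) (ζ k)) ^ m) :=
      fun k => summable_sum (fun j _ => hsummand k j)
    -- main identity
    have key : dotProduct (star x)
        (Matrix.mulVec (Matrix.of fun k j : Fin n => 1 / (1 - ζ j * (starRingEnd ℂ) (ζ k))) x)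
        = ∑' m : ℕ, ((Complex.normSq (f m) : ℝ) : ℂ) := by
      have step1 : dotProduct (star x)
          (Matrix.mulVec (Matrix.of fun k j : Fin n => 1 / (1 - ζ j * (starRingEnd ℂ) (ζ k))) x)
          = ∑ k, ∑ j, ∑' m : ℕ,
            (starRingEnd ℂ) (x k) * x j * (ζ j * (starRingEnd ℂ) (ζ k)) ^ m := by
        simp only [dotProduct, Matrix.mulVec, dotProduct, Matrix.of_apply,
          Pi.star_apply, Finset.mul_sum]
        refine Finset.sum_congr rfl fun k _ => Finset.sum_congr rfl fun j _ => ?_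
        rw [tsum_mul_left, tsum_geometric_of_norm_lt_one (hw k j)]
        have hne : (1 : ℂ) - ζ j * (starRingEnd ℂ) (ζ k) ≠ 0 := by
          intro h
          have h1 : (1 : ℂ) = ζ j * (starRingEnd ℂ) (ζ k) := by linear_combination h
          have := hw k j
          rw [← h1] at this
          simp at this
        field_simp [Complex.star_def]
        rw [Complex.star_def]
        ring
      rw [step1]
      rw [show (∑ k, ∑ j, ∑' m : ℕ,
            (starRingEnd ℂ) (x k) * x j * (ζ j * (starRingEnd ℂ) (ζ k)) ^ m)
          = ∑ k, ∑' m : ℕ, ∑ j,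
            (starRingEnd ℂ) (x k) * x j * (ζ j * (starRingEnd ℂ) (ζ k)) ^ m from
        Finset.sum_congr rfl fun k _ => (Summable.tsum_finsetSum (fun j _ => hsummand k j)).symm]
      rw [← Summable.tsum_finsetSum (fun k _ => hsumin k)]
      congr 1
      funext m
      have : ∑ k, ∑ j, (starRingEnd ℂ) (x k) * x j * (ζ j * (starRingEnd ℂ) (ζ k)) ^ m
          = (starRingEnd ℂ) (f m) * f m := by
        rw [hf, map_sum, Finset.sum_mul_sum]
        refine Finset.sum_congr rfl fun k _ => Finset.sum_congr rfl fun j _ => ?_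
        simp only [map_mul, map_pow]
        ring
      rw [this, mul_comm, Complex.mul_conj]
    -- summability of the normSq series
    have hsumtot : Summable (fun m : ℕ => ((Complex.normSq (f m) : ℝ) : ℂ)) := by
      have : (fun m : ℕ => ((Complex.normSq (f m) : ℝ) : ℂ))
          = fun m => ∑ k, ∑ j,
            (starRingEnd ℂ) (x k) * x j * (ζ j * (starRingEnd ℂ) (ζ k)) ^ m := by
        funext m
        rw [← Complex.mul_conj (f m), mul_comm]
        rw [hf, map_sum, Finset.sum_mul_sum]
        refine Finset.sum_congr rfl fun k _ => (Finset.sum_congr rfl fun j _ => ?_).symm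
        simp only [map_mul, map_pow]
        ring
      rw [this]
      exact summable_sum (fun k _ => hsumin k)
    have hsumR : Summable (fun m : ℕ => Complex.normSq (f m)) :=
      Complex.summable_ofReal.mp hsumtot
    -- exists m with f m ≠ 0
    have hex : ∃ m : ℕ, f m ≠ 0 := by
      by_contra hc
      push_neg at hc
      have hdet : (Matrix.vandermonde ζ).det ≠ 0 :=
        Matrix.det_vandermonde_ne_zero_iff.mpr hinj
      have hvm : Matrix.vecMul x (Matrix.vandermonde ζ) = 0 := by
        funext j
        have := hc (j : ℕ)
        simpa [Matrix.vecMul, dotProduct, Matrix.vandermonde, hf] using this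
      have : (Matrix.vandermonde ζ).det = 0 :=
        Matrix.exists_vecMul_eq_zero_iff.mp ⟨x, hx, hvm⟩
      exact hdet this
    obtain ⟨m₀, hm₀⟩ := hex
    rw [key, ← Complex.ofReal_tsum]
    rw [Complex.zero_lt_real]
    exact Summable.tsum_pos hsumR (fun m => Complex.normSq_nonneg _) m₀
      (Complex.normSq_pos.mpr hm₀)
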